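/- Let (W, θ) be a TLN on n neurons with uniform input θ > 0, and let τ ⊆ [n] be simply-embedded: for every j ∉ τ, W_{ij} is the same value γ_j for all i ∈ τ. Let ω = [n]\τ. Then for any σ ⊆ [n] and any i ∈ τ, the Cramer determinant s_i^σ := det((I - W_{σ∪{i}})_i ; θ·𝟙) factors as s_i^σ = (1/θ)·s_i^{σ∩ω}·s_i^{σ∩τ}, and moreover the value s_i^{σ∩ω} is the same for every i ∈ τ. -/

import Mathlib

/-- Cramer's determinant s_i^σ = det((I - W_{σ∪{i}})_i ; θ·𝟙): the determinant of
I - W restricted to rows and columns in σ ∪ {i}, with the column indexed by i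
replaced by the constant vector θ. -/
noncomputable def sdet {ι : Type*} [Fintype ι] [DecidableEq ι]
    (W : Matrix ι ι ℝ) (θ : ℝ) (σ : Finset ι) (i : ι) : ℝ :=
  Matrix.det (Matrix.of (fun a b : {x // x ∈ insert i σ} =>
    if (b : ι) = i then θ
    else (if (a : ι) = (b : ι) then (1 : ℝ) else 0) - W (a : ι) (b : ι)))

open Matrix

lemma det_congr_equiv {m n : Type*} [Fintype m] [DecidableEq m] [Fintype n] [DecidableEq n]
    (e : m ≃ n) (M : Matrix m m ℝ) (N : Matrix n n ℝ)
    (h : ∀ a b, M a b = N (e a) (e b)) : M.det = N.det := by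
  rw [← Matrix.det_submatrix_equiv_self e N]
  congr 1
  ext a b
  exact h a b

lemma key {α : Type*} [Fintype α] [DecidableEq α] (M : Matrix α α ℝ) (i : α)
    (P : α → Prop) [DecidablePred P] (hPi : P i)
    (hcol : ∀ a, M a i = M i i)
    (hrow : ∀ a, P a → ∀ b, ¬ P b → M a b = M i b) :
    M.det = (Matrix.of fun a b : {x // ¬ P x ∨ x = i} => M a b).det *
      (Matrix.of fun a b : {x // ¬ (¬ P x ∨ x = i)} => M (a : α) b - M i b).det := by
  classical
  let E : Matrix α α ℝ := Matrix.of fun a b =>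
    (if a = b then (1:ℝ) else 0) - (if b = i ∧ P a ∧ a ≠ i then 1 else 0)
  have hQE : ∀ a : α, (fun x => ¬ P x ∨ x = i) a → ∀ b, E a b = if a = b then (1:ℝ) else 0 := by
    intro a ha b
    have : ¬ (b = i ∧ P a ∧ a ≠ i) := by
      rintro ⟨rfl, hPa, hne⟩
      rcases ha with h | h
      · exact h hPa
      · exact hne h
    simp [E, this]
  have hEdet : E.det = 1 := by
    rw [← Matrix.det_submatrix_equiv_self (Equiv.sumCompl (fun x => ¬ P x ∨ x = i)) E]
    have : E.submatrix (Equiv.sumCompl (fun x => ¬ P x ∨ x = i)) (Equiv.sumCompl (fun x => ¬ P x ∨ x = i)) =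
        Matrix.fromBlocks 1 0
          (Matrix.of fun (a : {x // ¬ (fun x => ¬ P x ∨ x = i) x}) (b : {x // (fun x => ¬ P x ∨ x = i) x}) => E (a : α) b) 1 := by
      ext a b
      cases a with
      | inl a =>
        cases b with
        | inl b =>
          simp only [Matrix.submatrix_apply, Equiv.sumCompl_apply_inl, Matrix.fromBlocks_apply₁₁]
          rw [hQE a a.2 b]
          by_cases h : a = b
          · simp [h, Matrix.one_apply]
          · have : (a : α) ≠ (b : α) := fun hc => h (Subtype.ext hc)
            simp [Matrix.one_apply, h, this]
        | inr b =>
          simp only [Matrix.submatrix_apply, Equiv.sumCompl_apply_inl, Equiv.sumCompl_apply_inr,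
            Matrix.fromBlocks_apply₁₂]
          rw [hQE a a.2 b]
          have : (a : α) ≠ (b : α) := by
            intro hc
            exact b.2 (hc ▸ a.2)
          simp [this]
      | inr a =>
        cases b with
        | inl b =>
          simp only [Matrix.submatrix_apply, Equiv.sumCompl_apply_inl, Equiv.sumCompl_apply_inr,
            Matrix.fromBlocks_apply₂₁, Matrix.of_apply]
        | inr b =>
          simp only [Matrix.submatrix_apply, Equiv.sumCompl_apply_inr, Matrix.fromBlocks_apply₂₂]
          have hbi : (b : α) ≠ i := by
            intro hc
            exact b.2 (Or.inr hc)
          have : ¬ ((b:α) = i ∧ P (a:α) ∧ (a:α) ≠ i) := fun hc => hbi hc.1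
          by_cases h : a = b
          · simp only [E, Matrix.of_apply]
            rw [if_neg this, sub_zero, h]
            simp [Matrix.one_apply]
          · have h' : (a : α) ≠ (b : α) := fun hc => h (Subtype.ext hc)
            simp [E, this, h', Matrix.one_apply, h]
    rw [this, Matrix.det_fromBlocks_zero₁₂, Matrix.det_one, Matrix.det_one, one_mul]
  have hEM : E * M = Matrix.of fun a b =>
      M a b - (if P a ∧ a ≠ i then M i b else 0) := by
    ext a b
    simp only [Matrix.mul_apply, E, Matrix.of_apply, sub_mul, Finset.sum_sub_distrib, ite_mul,
      one_mul, zero_mul]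
    congr 1
    · rw [Finset.sum_ite_eq (Finset.univ) a (fun c => M c b)]
      simp
    · by_cases h : P a ∧ a ≠ i
      · simp only [eq_true h, and_true, if_true]
        rw [Finset.sum_ite_eq' (Finset.univ) i (fun c => M c b)]
        simp
      · simp only [eq_false h, and_false, if_false, Finset.sum_const_zero]
  have hdet : M.det = (E * M).det := by
    rw [Matrix.det_mul, hEdet, one_mul]
  rw [hdet]
  rw [← Matrix.det_submatrix_equiv_self (Equiv.sumCompl (fun x => ¬ P x ∨ x = i)) (E * M)]
  have hblocks : (E * M).submatrix (Equiv.sumCompl (fun x => ¬ P x ∨ x = i)) (Equiv.sumCompl (fun x => ¬ P x ∨ x = i)) =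
      Matrix.fromBlocks
        (Matrix.of fun a b : {x // (fun x => ¬ P x ∨ x = i) x} => M (a : α) b)
        (Matrix.of fun (a : {x // (fun x => ¬ P x ∨ x = i) x}) (b : {x // ¬ (fun x => ¬ P x ∨ x = i) x}) => M (a : α) b)
        0
        (Matrix.of fun a b : {x // ¬ (fun x => ¬ P x ∨ x = i) x} => M (a : α) b - M i b) := by
    ext a b
    have hent : ∀ a b : α, (E * M) a b = M a b - (if P a ∧ a ≠ i then M i b else 0) := by
      intro a b; rw [hEM]; rfl
    cases a with
    | inl a =>
      have hnot : ¬ (P (a : α) ∧ (a : α) ≠ i) := by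
        rintro ⟨hPa, hne⟩
        rcases a.2 with h | h
        · exact h hPa
        · exact hne h
      cases b with
      | inl b => simp [hent, hnot]
      | inr b => simp [hent, hnot]
    | inr a =>
      have ha : P (a : α) ∧ (a : α) ≠ i := by
        have := a.2
        simp only [not_or, not_not] at this
        exact ⟨this.1, this.2⟩
      cases b with
      | inl b =>
        simp only [Matrix.submatrix_apply, Equiv.sumCompl_apply_inl, Equiv.sumCompl_apply_inr,
          Matrix.fromBlocks_apply₂₁, Matrix.zero_apply, hent]
        rw [if_pos ha]
        rcases b.2 with h | h
        · rw [hrow (a : α) ha.1 (b : α) h]; ring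
        · rw [h, hcol (a : α), hcol i]; ring
      | inr b => simp [hent, ha]
  rw [hblocks, Matrix.det_fromBlocks_zero₂₁]

lemma sdet_indep (n : ℕ) (W : Matrix (Fin n) (Fin n) ℝ) (θ : ℝ)
    (τ ρ : Finset (Fin n)) (hρ : ∀ x ∈ ρ, x ∉ τ)
    (hse : ∀ j ∉ τ, ∀ i ∈ τ, ∀ k ∈ τ, W i j = W k j)
    {i k : Fin n} (hi : i ∈ τ) (hk : k ∈ τ) :
    sdet W θ ρ i = sdet W θ ρ k := by
  classical
  by_cases hik : i = k
  · subst hik; rfl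
  have hiρ : i ∉ ρ := fun h => hρ i h hi
  have hkρ : k ∉ ρ := fun h => hρ k h hk
  have hmem : ∀ a : Fin n, a ∈ insert i ρ ↔ Equiv.swap i k a ∈ insert k ρ := by
    intro a
    by_cases h1 : a = i
    · subst h1; simp [Equiv.swap_apply_left]
    · by_cases h2 : a = k
      · subst h2
        rw [Equiv.swap_apply_right]
        simp [Finset.mem_insert, hiρ, hkρ, hik, Ne.symm hik]
      · rw [Equiv.swap_apply_of_ne_of_ne h1 h2]
        simp [Finset.mem_insert, h1, h2]
  refine det_congr_equiv ((Equiv.swap i k).subtypeEquiv hmem) _ _ ?_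
  rintro ⟨a, ha⟩ ⟨b, hb⟩
  simp only [Matrix.of_apply, Equiv.subtypeEquiv_apply]
  have hb' : b ≠ i → (b ∈ ρ ∧ b ∉ τ ∧ b ≠ k) := by
    intro h
    have hbρ : b ∈ ρ := (Finset.mem_insert.mp hb).resolve_left h
    exact ⟨hbρ, hρ b hbρ, fun hc => hkρ (hc ▸ hbρ)⟩
  have ha' : a ≠ i → (a ∈ ρ ∧ a ∉ τ ∧ a ≠ k) := by
    intro h
    have haρ : a ∈ ρ := (Finset.mem_insert.mp ha).resolve_left h
    exact ⟨haρ, hρ a haρ, fun hc => hkρ (hc ▸ haρ)⟩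
  by_cases hbi : b = i
  · subst hbi
    simp [Equiv.swap_apply_left]
  · obtain ⟨hbρ, hbτ, hbk⟩ := hb' hbi
    simp only [if_neg hbi, Equiv.swap_apply_of_ne_of_ne hbi hbk, if_neg hbk]
    by_cases hai : a = i
    · subst hai
      simp only [Equiv.swap_apply_left]
      have h1 : a ≠ b := fun hc => hbτ (hc ▸ hi)
      have h2 : k ≠ b := fun hc => hbτ (hc ▸ hk)
      rw [if_neg h1, if_neg h2, hse b hbτ a hi k hk]
    · obtain ⟨haρ, haτ, hak⟩ := ha' hai
      simp only [Equiv.swap_apply_of_ne_of_ne hai hak]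

/-- Factorization of Cramer determinants over a simply-embedded subset: if τ is
simply-embedded in the TLN (W, θ) with uniform input θ > 0, and ω = [n]\τ, then
for every σ ⊆ [n] and i ∈ τ, s_i^σ = (1/θ)·s_i^{σ∩ω}·s_i^{σ∩τ}; moreover
s_i^{σ∩ω} has the same value for all i ∈ τ. -/
theorem simply_embedded_sdet_factorization (n : ℕ)
    (W : Matrix (Fin n) (Fin n) ℝ) (θ : ℝ) (hθ : 0 < θ)
    (τ : Finset (Fin n))
    (hse : ∀ j ∉ τ, ∀ i ∈ τ, ∀ k ∈ τ, W i j = W k j)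
    (σ : Finset (Fin n)) :
    (∀ i ∈ τ, sdet W θ σ i = (1 / θ) * sdet W θ (σ \ τ) i * sdet W θ (σ ∩ τ) i) ∧
    (∀ i ∈ τ, ∀ k ∈ τ, sdet W θ (σ \ τ) i = sdet W θ (σ \ τ) k) := by
  classical
  constructor
  · intro i hi
    -- Application 1: full matrix
    set M₁ : Matrix {x // x ∈ insert i σ} {x // x ∈ insert i σ} ℝ :=
      Matrix.of (fun a b : {x // x ∈ insert i σ} =>
        if (b : Fin n) = i then θ
        else (if (a : Fin n) = (b : Fin n) then (1 : ℝ) else 0) - W (a : Fin n) (b : Fin n))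
      with hM₁
    set i₁ : {x // x ∈ insert i σ} := ⟨i, Finset.mem_insert_self i σ⟩ with hi₁
    have hcol₁ : ∀ a, M₁ a i₁ = M₁ i₁ i₁ := by
      intro a; simp [hM₁, hi₁]
    have hrow₁ : ∀ a : {x // x ∈ insert i σ}, (a : Fin n) ∈ τ →
        ∀ b : {x // x ∈ insert i σ}, ¬ ((b : Fin n) ∈ τ) → M₁ a b = M₁ i₁ b := by
      intro a ha b hb
      have hbi : (b : Fin n) ≠ i := fun hc => hb (by rw [hc]; exact hi)
      have hab : (a : Fin n) ≠ (b : Fin n) := fun hc => hb (by rw [← hc]; exact ha)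
      have hib : (i : Fin n) ≠ (b : Fin n) := fun hc => hb (by rw [← hc]; exact hi)
      simp only [hM₁, Matrix.of_apply, if_neg hbi]
      rw [if_neg hab, if_neg hib, hse (b : Fin n) hb (a : Fin n) ha i hi]
    have h1 := key M₁ i₁ (fun x => (x : Fin n) ∈ τ) hi hcol₁ hrow₁
    -- Application 2: the τ-part matrix
    set M₂ : Matrix {x // x ∈ insert i (σ ∩ τ)} {x // x ∈ insert i (σ ∩ τ)} ℝ :=
      Matrix.of (fun a b : {x // x ∈ insert i (σ ∩ τ)} =>
        if (b : Fin n) = i then θ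
        else (if (a : Fin n) = (b : Fin n) then (1 : ℝ) else 0) - W (a : Fin n) (b : Fin n))
      with hM₂
    set i₂ : {x // x ∈ insert i (σ ∩ τ)} := ⟨i, Finset.mem_insert_self i (σ ∩ τ)⟩ with hi₂
    have hcol₂ : ∀ a, M₂ a i₂ = M₂ i₂ i₂ := by
      intro a; simp [hM₂, hi₂]
    have h2 := key M₂ i₂ (fun _ => True) trivial hcol₂
      (fun a _ b hb => absurd trivial hb)
    -- the 1×1 block of application 2
    letI : Unique {x : {x // x ∈ insert i (σ ∩ τ)} // ¬ True ∨ x = i₂} :=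
      { default := ⟨i₂, Or.inr rfl⟩
        uniq := by
          rintro ⟨x, (h | h)⟩
          · exact absurd trivial h
          · exact Subtype.ext h }
    have hA₂ : (Matrix.of fun a b : {x : {x // x ∈ insert i (σ ∩ τ)} // ¬ True ∨ x = i₂} =>
        M₂ (a : {x // x ∈ insert i (σ ∩ τ)}) b).det = θ := by
      rw [Matrix.det_unique]
      show M₂ i₂ i₂ = θ
      simp [hM₂, hi₂]
    rw [hA₂] at h2
    -- identify the A-block of application 1 with sdet (σ \ τ)
    have heA : (Matrix.of fun a b : {x : {x // x ∈ insert i σ} //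
          ¬ (x : Fin n) ∈ τ ∨ x = i₁} => M₁ (a : {x // x ∈ insert i σ}) b).det
        = sdet W θ (σ \ τ) i := by
      refine det_congr_equiv ?_ _ _ ?_
      · refine ⟨fun x => ⟨((x : {y // y ∈ insert i σ}) : Fin n), ?_⟩,
          fun y => ⟨⟨(y : Fin n), ?_⟩, ?_⟩, ?_, ?_⟩
        · rcases x.2 with h | h
          · have hx : ((x : {y // y ∈ insert i σ}) : Fin n) ∈ insert i σ :=
              (x : {y // y ∈ insert i σ}).2
            rcases Finset.mem_insert.mp hx with h' | h'
            · rw [h']; exact Finset.mem_insert_self i (σ \ τ)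
            · exact Finset.mem_insert_of_mem (Finset.mem_sdiff.mpr ⟨h', h⟩)
          · rw [h]; exact Finset.mem_insert_self i (σ \ τ)
        · rcases Finset.mem_insert.mp y.2 with h | h
          · rw [h]; exact Finset.mem_insert_self i σ
          · exact Finset.mem_insert_of_mem (Finset.mem_sdiff.mp h).1
        · rcases Finset.mem_insert.mp y.2 with h | h
          · exact Or.inr (Subtype.ext h)
          · exact Or.inl (Finset.mem_sdiff.mp h).2
        · rintro ⟨⟨x, hx1⟩, hx2⟩; rfl
        · rintro ⟨y, hy⟩; rfl
      · rintro a b; rfl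
    -- identify the D-blocks of the two applications
    have heD : (Matrix.of fun a b : {x : {x // x ∈ insert i σ} //
          ¬ (¬ (x : Fin n) ∈ τ ∨ x = i₁)} =>
          M₁ (a : {x // x ∈ insert i σ}) b - M₁ i₁ b).det
        = (Matrix.of fun a b : {x : {x // x ∈ insert i (σ ∩ τ)} //
          ¬ (¬ True ∨ x = i₂)} =>
          M₂ (a : {x // x ∈ insert i (σ ∩ τ)}) b - M₂ i₂ b).det := by
      refine det_congr_equiv ?_ _ _ ?_
      · refine ⟨fun x => ⟨⟨((x : {y // y ∈ insert i σ}) : Fin n), ?_⟩, ?_⟩,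
          fun y => ⟨⟨((y : {z // z ∈ insert i (σ ∩ τ)}) : Fin n), ?_⟩, ?_⟩, ?_, ?_⟩
        · have hx2 := x.2
          rw [not_or, not_not] at hx2
          obtain ⟨hxτ, hxi⟩ := hx2
          have hxiv : ((x : {y // y ∈ insert i σ}) : Fin n) ≠ i := fun hc => hxi (Subtype.ext hc)
          have : ((x : {y // y ∈ insert i σ}) : Fin n) ∈ σ :=
            (Finset.mem_insert.mp (x : {y // y ∈ insert i σ}).2).resolve_left hxiv
          exact Finset.mem_insert_of_mem (Finset.mem_inter.mpr ⟨this, hxτ⟩)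
        · rintro (h | h)
          · exact h trivial
          · have hx2 := x.2
            rw [not_or, not_not] at hx2
            exact hx2.2 (Subtype.ext (show ((x : {y // y ∈ insert i σ}) : Fin n) = i from
              congrArg Subtype.val h))
        · have hy2 := y.2
          rw [not_or] at hy2
          have hyi : ((y : {z // z ∈ insert i (σ ∩ τ)}) : Fin n) ≠ i :=
            fun hc => hy2.2 (Subtype.ext hc)
          have : ((y : {z // z ∈ insert i (σ ∩ τ)}) : Fin n) ∈ σ ∩ τ :=
            (Finset.mem_insert.mp (y : {z // z ∈ insert i (σ ∩ τ)}).2).resolve_left hyi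
          exact Finset.mem_insert_of_mem (Finset.mem_inter.mp this).1
        · have hy2 := y.2
          rw [not_or] at hy2
          have hyi : ((y : {z // z ∈ insert i (σ ∩ τ)}) : Fin n) ≠ i :=
            fun hc => hy2.2 (Subtype.ext hc)
          have hyστ : ((y : {z // z ∈ insert i (σ ∩ τ)}) : Fin n) ∈ σ ∩ τ :=
            (Finset.mem_insert.mp (y : {z // z ∈ insert i (σ ∩ τ)}).2).resolve_left hyi
          rw [not_or, not_not]
          exact ⟨(Finset.mem_inter.mp hyστ).2, fun hc => hyi (congrArg Subtype.val hc)⟩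
        · rintro ⟨⟨x, hx1⟩, hx2⟩; rfl
        · rintro ⟨⟨y, hy1⟩, hy2⟩; rfl
      · rintro a b; rfl
    rw [heA, heD] at h1
    rw [show sdet W θ σ i = M₁.det from rfl, h1,
      show sdet W θ (σ ∩ τ) i = M₂.det from rfl, h2]
    field_simp
  · intro i hi k hk
    exact sdet_indep n W θ τ (σ \ τ) (fun x hx => (Finset.mem_sdiff.mp hx).2) hse hi hk
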